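/- (The circular embedding minimizes the L_n^{1/2}-energy.) Let X_C ∈ ℝ^{n×2} have rows (X_C)_{j,·} = √(2/n)·(cos(2πj/n), sin(2πj/n)), j = 1,…,n. Then X_Cᵀ X_C = I₂, X_Cᵀ 𝟏ₙ = 0, Tr(X_Cᵀ L_n^{1/2} X_C) = 4 sin(π/n), and for every X ∈ ℝ^{n×2} with Xᵀ X = I₂ and Xᵀ 𝟏ₙ = 0 one has Tr(Xᵀ L_n^{1/2} X) ≥ 4 sin(π/n). -/

import Mathlib

open Real Matrix

noncomputable section

/-- The Laplacian of the `n`-cycle. -/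
def cycLap (n : ℕ) : Matrix (ZMod n) (ZMod n) ℝ :=
  Matrix.of fun i j => if i = j then 2 else if i = j + 1 ∨ j = i + 1 then -1 else 0

/-- The circular embedding: rows `(X_C)_{j,·} = √(2/n)·(cos(2πj/n), sin(2πj/n))`. -/
def circEmb (n : ℕ) : Matrix (ZMod n) (Fin 2) ℝ :=
  Matrix.of fun j t =>
    Real.sqrt (2 / (n : ℝ)) *
      (if t = 0 then Real.cos (2 * π * (j.val : ℝ) / n)
       else Real.sin (2 * π * (j.val : ℝ) / n))

/-- The square root `Matrix.PosSemidef.sqrt` of the older Mathlib, spelled out (it is gone now). -/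
def psdSqrt {m : Type*} [Fintype m] [DecidableEq m] {A : Matrix m m ℝ}
    (hA : A.PosSemidef) : Matrix m m ℝ :=
  hA.1.eigenvectorUnitary.1 * diagonal ((↑) ∘ (√·) ∘ hA.1.eigenvalues) *
  (star hA.1.eigenvectorUnitary : Matrix m m ℝ)

lemma psdSqrt_posSemidef {m : Type*} [Fintype m] [DecidableEq m] {A : Matrix m m ℝ}
    (hA : A.PosSemidef) : (psdSqrt hA).PosSemidef := by
  have hd : (diagonal ((↑) ∘ (√·) ∘ hA.1.eigenvalues) : Matrix m m ℝ).PosSemidef :=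
    posSemidef_diagonal_iff.mpr fun i => by simp [Real.sqrt_nonneg]
  exact hd.mul_mul_conjTranspose_same hA.1.eigenvectorUnitary.1

lemma psdSqrt_mul_self {m : Type*} [Fintype m] [DecidableEq m] {A : Matrix m m ℝ}
    (hA : A.PosSemidef) : psdSqrt hA * psdSqrt hA = A := by
  have hU : (star hA.1.eigenvectorUnitary : Matrix m m ℝ) * hA.1.eigenvectorUnitary.1 = 1 :=
    Unitary.coe_star_mul_self _
  have hD : (diagonal ((↑) ∘ (√·) ∘ hA.1.eigenvalues) : Matrix m m ℝ) *
      diagonal ((↑) ∘ (√·) ∘ hA.1.eigenvalues) = diagonal (RCLike.ofReal ∘ hA.1.eigenvalues) := by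
    rw [diagonal_mul_diagonal]; congr 1; funext i
    simp [Real.mul_self_sqrt (hA.eigenvalues_nonneg i)]
  conv_rhs => rw [hA.1.spectral_theorem, Unitary.conjStarAlgAut_apply, ← hD]
  unfold psdSqrt
  simp only [mul_assoc]
  rw [← mul_assoc (star _ : Matrix m m ℝ) _ (_ * _), hU, one_mul]

namespace CycAux

set_option linter.unusedSectionVars false

variable (n : ℕ) [NeZero n]

/-- the primitive `n`-th root of unity -/
def ζ (n : ℕ) : ℂ := Complex.exp ((2 * π / n : ℝ) * Complex.I)

lemma zeta_pow (m : ℕ) : ζ n ^ m = Complex.exp ((2 * π * m / n : ℝ) * Complex.I) := by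
  rw [ζ, ← Complex.exp_nat_mul]; congr 1; push_cast; ring

lemma zeta_pow_n : ζ n ^ n = 1 := by
  rw [zeta_pow]
  have hn : (n : ℝ) ≠ 0 := Nat.cast_ne_zero.2 (NeZero.ne n)
  have h : (2 * π * n / n : ℝ) = 2 * π := by field_simp
  rw [h]
  simpa using Complex.exp_int_mul_two_pi_mul_I 1

lemma zeta_pow_mod (m : ℕ) : ζ n ^ (m % n) = ζ n ^ m := by
  conv_rhs => rw [← Nat.div_add_mod m n, pow_add, pow_mul, zeta_pow_n, one_pow, one_mul]

/-- the characters of `ZMod n` -/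
def e (a : ZMod n) : ℂ := ζ n ^ a.val

lemma e_add (a b : ZMod n) : e n (a + b) = e n a * e n b := by
  rw [e, ZMod.val_add, zeta_pow_mod, pow_add, e, e]

lemma e_zero : e n 0 = 1 := by rw [e, ZMod.val_zero, pow_zero]

lemma e_nsmul (m : ℕ) (a : ZMod n) : e n (m • a) = e n a ^ m := by
  induction m with
  | zero => simpa using e_zero n
  | succ k ih => rw [succ_nsmul, e_add, ih, pow_succ]

lemma e_eq_exp (a : ZMod n) :
    e n a = Complex.exp ((2 * π * a.val / n : ℝ) * Complex.I) := by
  rw [e, zeta_pow]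

lemma e_re (a : ZMod n) : (e n a).re = Real.cos (2 * π * a.val / n) := by
  rw [e_eq_exp, Complex.exp_ofReal_mul_I_re]

lemma e_im (a : ZMod n) : (e n a).im = Real.sin (2 * π * a.val / n) := by
  rw [e_eq_exp, Complex.exp_ofReal_mul_I_im]

lemma e_ne_zero (a : ZMod n) : e n a ≠ 0 := by
  rw [e_eq_exp]; exact Complex.exp_ne_zero _

lemma e_mul_e_neg (a : ZMod n) : e n a * e n (-a) = 1 := by
  rw [← e_add, add_neg_cancel, e_zero]

lemma norm_e (a : ZMod n) : (e n a).re ^ 2 + (e n a).im ^ 2 = 1 := by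
  have h : Complex.normSq (e n a) = 1 := by
    rw [e_eq_exp, Complex.normSq_eq_norm_sq, Complex.norm_exp_ofReal_mul_I, one_pow]
  rw [Complex.normSq_apply] at h
  nlinarith [h]

lemma e_add_e_neg (a : ZMod n) :
    e n a + e n (-a) = ((2 * Real.cos (2 * π * a.val / n) : ℝ) : ℂ) := by
  have h1 := e_mul_e_neg n a
  have h2 : e n (-a) = (e n a)⁻¹ := by
    field_simp [e_ne_zero]
    linear_combination h1
  rw [h2, e_eq_exp, ← Complex.exp_neg]
  push_cast
  rw [Complex.two_cos]
  ring

lemma e_ne_one {a : ZMod n} (ha : a ≠ 0) : e n a ≠ 1 := by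
  have hnpos : (0:ℝ) < n := by exact_mod_cast Nat.pos_of_ne_zero (NeZero.ne n)
  have hval : 1 ≤ a.val := Nat.one_le_iff_ne_zero.2 (fun h => ha ((ZMod.val_eq_zero a).1 h))
  have hvlt : (a.val : ℝ) < n := by exact_mod_cast ZMod.val_lt a
  have hv1 : (1:ℝ) ≤ (a.val : ℝ) := by exact_mod_cast hval
  rw [e_eq_exp]
  intro h
  have hre : Real.cos (2 * π * a.val / n) = 1 := by
    have h2 := congrArg Complex.re h
    rwa [Complex.exp_ofReal_mul_I_re, Complex.one_re] at h2
  set x : ℝ := 2 * π * a.val / n with hx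
  have hxpos : 0 < x := div_pos (by positivity) hnpos
  have hxlt : x < 2 * π := by
    rw [hx, div_lt_iff₀ hnpos]
    nlinarith [Real.pi_pos]
  have := (Real.cos_eq_one_iff_of_lt_of_lt (by linarith) hxlt).1 hre
  linarith

lemma sum_zmod {M : Type*} [AddCommMonoid M] (f : ZMod n → M) :
    ∑ a : ZMod n, f a = ∑ m ∈ Finset.range n, f m := by
  refine Finset.sum_nbij' (fun a => a.val) (fun m => (m : ZMod n)) ?_ ?_ ?_ ?_ ?_
  · intro a _; exact Finset.mem_range.2 (ZMod.val_lt a)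
  · intro m _; exact Finset.mem_univ _
  · intro a _; exact ZMod.natCast_rightInverse a
  · intro m hm; exact ZMod.val_natCast_of_lt (Finset.mem_range.1 hm)
  · intro a _; rw [ZMod.natCast_rightInverse a]

lemma sum_e {a : ZMod n} (ha : a ≠ 0) : ∑ k : ZMod n, e n (k * a) = 0 := by
  have key : ∀ k : ZMod n, e n (k * a) = e n a ^ k.val := by
    intro k
    rw [← e_nsmul, nsmul_eq_mul, ZMod.natCast_rightInverse k]
  simp_rw [key]
  rw [sum_zmod]
  have h : ∀ m ∈ Finset.range n, e n a ^ ((m : ZMod n)).val = e n a ^ m := by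
    intro m hm; rw [ZMod.val_natCast_of_lt (Finset.mem_range.1 hm)]
  rw [Finset.sum_congr rfl h, geom_sum_eq (e_ne_one n ha)]
  have h2 : e n a ^ n = 1 := by
    rw [e, ← pow_mul, mul_comm, pow_mul, zeta_pow_n, one_pow]
  rw [h2, sub_self, zero_div]

lemma nc_ne_zero (hn : 3 ≤ n) {m : ℕ} (h1 : 1 ≤ m) (h2 : m < 3) : ((m:ℕ) : ZMod n) ≠ 0 := by
  rw [Ne, ZMod.natCast_eq_zero_iff]
  intro h
  have := Nat.le_of_dvd (by omega) h
  omega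

lemma one_ne_zero' (hn : 3 ≤ n) : (1 : ZMod n) ≠ 0 := by
  simpa using nc_ne_zero n hn (m := 1) le_rfl (by norm_num)

lemma two_ne_zero' (hn : 3 ≤ n) : (2 : ZMod n) ≠ 0 := by
  simpa using nc_ne_zero n hn (m := 2) (by norm_num) (by norm_num)

lemma cycLap_mulVec (hn : 3 ≤ n) (v : ZMod n → ℝ) (i : ZMod n) :
    (cycLap n *ᵥ v) i = 2 * v i - v (i - 1) - v (i + 1) := by
  have h1 := one_ne_zero' n hn
  have h2 := two_ne_zero' n hn
  have key : ∀ j : ZMod n, cycLap n i j * v j =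
      (if j = i then 2 * v j else 0) + (if j = i - 1 then -v j else 0)
        + (if j = i + 1 then -v j else 0) := by
    intro j
    simp only [cycLap, Matrix.of_apply]
    by_cases hq : j = i
    · subst hq
      rw [if_pos rfl, if_pos rfl, if_neg (fun h : j = j - 1 => h1 (by linear_combination h)),
        if_neg (fun h : j = j + 1 => h1 (by linear_combination -h))]
      ring
    · rw [if_neg (fun h => hq h.symm), if_neg hq]
      by_cases hm : j = i - 1
      · rw [if_pos (Or.inl (by rw [hm]; ring)), if_pos hm,
          if_neg (fun h : j = i + 1 => h2 (by linear_combination hm - h))]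
        ring
      · by_cases hp : j = i + 1
        · rw [if_pos (Or.inr hp), if_pos hp, if_neg hm]
          ring
        · rw [if_neg, if_neg hm, if_neg hp]
          · ring
          · rintro (h | h)
            · exact hm (by linear_combination -h)
            · exact hp h
  rw [Matrix.mulVec, dotProduct]
  simp_rw [key]
  rw [Finset.sum_add_distrib, Finset.sum_add_distrib, Finset.sum_ite_eq', Finset.sum_ite_eq',
    Finset.sum_ite_eq']
  simp only [Finset.mem_univ, if_true]
  ring

/-- reindexing a sum over `ZMod n` by a shift -/
lemma sum_shift {M : Type*} [AddCommMonoid M] (f : ZMod n → M) (c : ZMod n) :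
    ∑ j : ZMod n, f (j + c) = ∑ j : ZMod n, f j := by
  exact Fintype.sum_equiv (Equiv.addRight c) _ _ (fun j => rfl)

lemma quad_form (hn : 3 ≤ n) (v : ZMod n → ℝ) :
    v ⬝ᵥ (cycLap n *ᵥ v) = ∑ i : ZMod n, (v (i + 1) - v i) ^ 2 := by
  set S := ∑ i : ZMod n, (v i)^2 with hS
  set T := ∑ i : ZMod n, v (i + 1) * v i with hT
  have key : ∀ i ∈ Finset.univ, v i * (cycLap n *ᵥ v) i
      = 2 * (v i)^2 - v i * v (i - 1) - v i * v (i + 1) := by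
    intro i _
    rw [cycLap_mulVec n hn]
    ring
  have h1 : ∑ i : ZMod n, v i * v (i - 1) = T := by
    rw [hT, ← sum_shift n (fun i => v i * v (i - 1)) 1]
    simp
  have h2 : ∑ i : ZMod n, v i * v (i + 1) = T := by
    rw [hT]
    exact Finset.sum_congr rfl fun i _ => mul_comm _ _
  have h3 : ∑ i : ZMod n, (v (i + 1))^2 = S := by
    rw [hS, sum_shift n (fun i => (v i)^2) 1]
  have hLHS : v ⬝ᵥ (cycLap n *ᵥ v) = 2 * S - T - T := by
    rw [dotProduct, Finset.sum_congr rfl key, Finset.sum_sub_distrib, Finset.sum_sub_distrib,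
      h1, h2, ← Finset.mul_sum, ← hS]
  have expand : ∀ i ∈ Finset.univ, (v (i + 1) - v i) ^ 2
      = ((v (i+1))^2 + (v i)^2) - 2 * (v (i+1) * v i) := by intro i _; ring
  have hRHS : ∑ i : ZMod n, (v (i + 1) - v i) ^ 2 = (S + S) - 2 * T := by
    rw [Finset.sum_congr rfl expand, Finset.sum_sub_distrib, Finset.sum_add_distrib,
      h3, ← Finset.mul_sum, ← hS, ← hT]
  rw [hLHS, hRHS]
  ring

lemma const_of_quad_zero (hn : 3 ≤ n) (v : ZMod n → ℝ)
    (h : v ⬝ᵥ (cycLap n *ᵥ v) = 0) : ∀ i : ZMod n, v i = v 0 := by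
  rw [quad_form n hn] at h
  have hz : ∀ i : ZMod n, (v (i + 1) - v i) ^ 2 = 0 := by
    intro i
    have := (Finset.sum_eq_zero_iff_of_nonneg (fun i _ => sq_nonneg _)).1 h i (Finset.mem_univ i)
    exact this
  have hstep : ∀ i : ZMod n, v (i + 1) = v i := by
    intro i
    have := hz i
    nlinarith [this]
  have key : ∀ m : ℕ, v ((m : ℕ) : ZMod n) = v 0 := by
    intro m
    induction m with
    | zero => norm_num
    | succ k ih =>
      have : ((k+1 : ℕ) : ZMod n) = ((k : ℕ) : ZMod n) + 1 := by push_cast; ring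
      rw [this, hstep, ih]
  intro i
  have := key i.val
  rwa [ZMod.natCast_rightInverse i] at this

lemma e_nbr_sum (hn : 3 ≤ n) (i : ZMod n) :
    e n (i - 1) + e n (i + 1) = ((2 * Real.cos (2 * π / n) : ℝ) : ℂ) * e n i := by
  have hsub : e n (i - 1) * e n 1 = e n i := by
    rw [← e_add, sub_add_cancel]
  have hadd : e n (i + 1) = e n i * e n 1 := by rw [← e_add]
  have hne : e n 1 ≠ 0 := e_ne_zero n 1
  have hone : e n 1 = Complex.exp ((2 * π / n : ℝ) * Complex.I) := by
    rw [e, ZMod.val_one_eq_one_mod, Nat.mod_eq_of_lt (by omega), pow_one, ζ]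
  have hm : e n (i - 1) = e n i * (e n 1)⁻¹ := by
    field_simp [hne] at hsub ⊢
    linear_combination hsub
  rw [hm, hadd, hone, ← Complex.exp_neg]
  have h2 : ((2 * Real.cos (2 * π / n) : ℝ) : ℂ)
      = Complex.exp (-((2 * π / n : ℝ) * Complex.I))
        + Complex.exp ((2 * π / n : ℝ) * Complex.I) := by
    push_cast
    rw [Complex.two_cos]
    ring
  rw [h2]; ring

lemma circEmb_col (j : ZMod n) (t : Fin 2) :
    circEmb n j t = Real.sqrt (2 / n) * (if t = 0 then (e n j).re else (e n j).im) := by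
  rw [e_re, e_im]; rfl

lemma col_eigen (hn : 3 ≤ n) (t : Fin 2) :
    cycLap n *ᵥ (fun j => circEmb n j t)
      = (2 - 2 * Real.cos (2 * π / n)) • (fun j => circEmb n j t) := by
  funext i
  rw [Pi.smul_apply, smul_eq_mul, cycLap_mulVec n hn]
  have hnbr := e_nbr_sum n hn i
  have hre : (e n (i-1)).re + (e n (i+1)).re
      = 2 * Real.cos (2 * π / n) * (e n i).re := by
    have h := congrArg Complex.re hnbr
    rw [Complex.add_re] at h
    rw [h, Complex.re_ofReal_mul]
  have him : (e n (i-1)).im + (e n (i+1)).im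
      = 2 * Real.cos (2 * π / n) * (e n i).im := by
    have h := congrArg Complex.im hnbr
    rw [Complex.add_im] at h
    rw [h, Complex.im_ofReal_mul]
  rw [circEmb_col, circEmb_col, circEmb_col]
  by_cases ht : t = 0
  · rw [if_pos ht, if_pos ht, if_pos ht]
    linear_combination (-Real.sqrt (2/n)) * hre
  · rw [if_neg ht, if_neg ht, if_neg ht]
    linear_combination (-Real.sqrt (2/n)) * him

lemma sum_e_one (hn : 3 ≤ n) : ∑ j : ZMod n, e n j = 0 := by
  have := sum_e n (one_ne_zero' n hn)
  simpa using this

lemma sum_e_two (hn : 3 ≤ n) : ∑ j : ZMod n, e n (j * 2) = 0 :=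
  sum_e n (two_ne_zero' n hn)

lemma sum_re_sq (hn : 3 ≤ n) : ∑ j : ZMod n, (e n j).re ^ 2 = n / 2 ∧
    (∑ j : ZMod n, (e n j).im ^ 2 = n / 2 ∧
     ∑ j : ZMod n, (e n j).re * (e n j).im = 0) := by
  have hsq : ∀ j : ZMod n, e n (j * 2) = e n j * e n j := by
    intro j
    rw [show j * 2 = j + j from by ring, e_add]
  have h2re : ∑ j : ZMod n, ((e n j).re ^ 2 - (e n j).im ^ 2) = 0 := by
    have h := congrArg Complex.re (sum_e_two n hn)
    rw [Complex.re_sum, Complex.zero_re] at h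
    rw [← h]
    refine Finset.sum_congr rfl fun j _ => ?_
    rw [hsq j, Complex.mul_re]
    ring
  have h2im : ∑ j : ZMod n, (2 * ((e n j).re * (e n j).im)) = 0 := by
    have h := congrArg Complex.im (sum_e_two n hn)
    rw [Complex.im_sum, Complex.zero_im] at h
    rw [← h]
    refine Finset.sum_congr rfl fun j _ => ?_
    rw [hsq j, Complex.mul_im]
    ring
  have hone : ∑ j : ZMod n, ((e n j).re ^ 2 + (e n j).im ^ 2) = (n : ℝ) := by
    rw [Finset.sum_congr rfl fun j _ => norm_e n j]
    simp [Finset.card_univ, ZMod.card]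
  rw [Finset.sum_sub_distrib] at h2re
  rw [Finset.sum_add_distrib] at hone
  rw [← Finset.mul_sum] at h2im
  refine ⟨by linarith, by linarith, by linarith⟩

lemma gram_entry (hn : 3 ≤ n) (s t : Fin 2) :
    ∑ j : ZMod n, circEmb n j s * circEmb n j t = if s = t then 1 else 0 := by
  obtain ⟨hA, hB, hC⟩ := sum_re_sq n hn
  have hnR : (0:ℝ) < n := by
    have := NeZero.pos n
    exact_mod_cast this
  have hc : Real.sqrt (2/n) * Real.sqrt (2/n) = 2 / n :=
    Real.mul_self_sqrt (by positivity)
  have key : ∀ (a b : ℝ), Real.sqrt (2/n) * a * (Real.sqrt (2/n) * b) = (2/n) * (a * b) := by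
    intro a b
    rw [mul_mul_mul_comm, hc]
  have hcase : ∀ u : Fin 2, u = 0 ∨ u = 1 := by decide
  have h10 : ((1:Fin 2) = 0) ↔ False := by decide
  have h01 : ((0:Fin 2) = 1) ↔ False := by decide
  rcases hcase s with rfl | rfl <;> rcases hcase t with rfl | rfl <;>
    simp only [circEmb_col, h10, h01, if_false, if_true, eq_self_iff_true] <;>
    rw [Finset.sum_congr rfl fun j _ => key _ _, ← Finset.mul_sum]
  · rw [show (∑ j : ZMod n, (e n j).re * (e n j).re) = ∑ j : ZMod n, (e n j).re ^ 2 from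
      Finset.sum_congr rfl fun j _ => (sq ((e n j).re)).symm, hA]
    field_simp
  · rw [hC]; ring
  · rw [show (∑ j : ZMod n, (e n j).im * (e n j).re)
      = ∑ j : ZMod n, (e n j).re * (e n j).im from
      Finset.sum_congr rfl fun j _ => mul_comm _ _, hC]
    ring
  · rw [show (∑ j : ZMod n, (e n j).im * (e n j).im) = ∑ j : ZMod n, (e n j).im ^ 2 from
      Finset.sum_congr rfl fun j _ => (sq ((e n j).im)).symm, hB]
    field_simp

lemma col_sum_zero (hn : 3 ≤ n) (t : Fin 2) :
    ∑ j : ZMod n, circEmb n j t = 0 := by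
  have hre : ∑ j : ZMod n, (e n j).re = 0 := by
    have h := congrArg Complex.re (sum_e_one n hn)
    rwa [Complex.re_sum] at h
  have him : ∑ j : ZMod n, (e n j).im = 0 := by
    have h := congrArg Complex.im (sum_e_one n hn)
    rwa [Complex.im_sum] at h
  simp_rw [circEmb_col]
  rw [← Finset.mul_sum]
  fin_cases t
  · simp [hre]
  · simp [him]

lemma sin_mono_half (hn : 3 ≤ n) {x : ℕ} (h1 : 1 ≤ x) (h2 : 2 * x ≤ n) :
    Real.sin (π / n) ≤ Real.sin (π * x / n) := by
  have hnR : (0:ℝ) < n := by exact_mod_cast NeZero.pos n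
  have hx1 : (1:ℝ) ≤ (x:ℝ) := by exact_mod_cast h1
  have hx2 : 2 * (x:ℝ) ≤ n := by exact_mod_cast h2
  have hpi := Real.pi_pos
  have ha : π / n ∈ Set.Icc (-(π/2)) (π/2) := by
    constructor
    · have : 0 < π / n := by positivity
      linarith
    · rw [div_le_div_iff₀ hnR (by norm_num : (0:ℝ) < 2)]
      nlinarith
  have hb : π * x / n ∈ Set.Icc (-(π/2)) (π/2) := by
    constructor
    · have : 0 ≤ π * x / n := by positivity
      linarith
    · rw [div_le_div_iff₀ hnR (by norm_num : (0:ℝ) < 2)]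
      nlinarith
  have hab : π / n ≤ π * x / n := by
    rw [div_le_div_iff₀ hnR hnR]
    nlinarith [mul_nonneg (mul_nonneg hpi.le (sub_nonneg.mpr hx1)) hnR.le]
  exact Real.strictMonoOn_sin.monotoneOn ha hb hab

lemma sin_mono (hn : 3 ≤ n) {x : ℕ} (h1 : 1 ≤ x) (h2 : x ≤ n - 1) :
    Real.sin (π / n) ≤ Real.sin (π * x / n) := by
  by_cases hc : 2 * x ≤ n
  · exact sin_mono_half n hn h1 hc
  · push_neg at hc
    have hxn : x ≤ n := by omega
    have hy1 : 1 ≤ n - x := by omega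
    have hy2 : 2 * (n - x) ≤ n := by omega
    have key := sin_mono_half n hn hy1 hy2
    have hrw : π * ((n - x : ℕ) : ℝ) / n = π - π * x / n := by
      have : ((n - x : ℕ) : ℝ) = (n:ℝ) - x := by
        push_cast [Nat.cast_sub hxn]; ring
      rw [this]
      have hnne : (n:ℝ) ≠ 0 := by positivity
      field_simp
    rwa [hrw, Real.sin_pi_sub] at key

lemma eig_lb (hn : 3 ≤ n) {μ : ℝ} {u : ZMod n → ℝ}
    (hu : cycLap n *ᵥ u = μ • u) (hsum : ∑ j : ZMod n, u j = 0) (hne : u ≠ 0) :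
    (2 * Real.sin (π / n)) ^ 2 ≤ μ := by
  have hnC : (n : ℂ) ≠ 0 := Nat.cast_ne_zero.2 (NeZero.ne n)
  set uh : ZMod n → ℂ := fun k => ∑ j : ZMod n, (u j : ℂ) * e n (k * j) with huh
  have shift1 : ∀ k : ZMod n, ∑ j : ZMod n, ((u (j - 1) : ℝ) : ℂ) * e n (k * j)
      = e n k * uh k := by
    intro k
    rw [← sum_shift n (fun j => ((u (j - 1) : ℝ) : ℂ) * e n (k * j)) 1]
    simp only [add_sub_cancel_right]
    rw [huh, Finset.mul_sum]
    refine Finset.sum_congr rfl fun j _ => ?_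
    rw [show k * (j + 1) = k * j + k from by ring, e_add]
    ring
  have shift2 : ∀ k : ZMod n, ∑ j : ZMod n, ((u (j + 1) : ℝ) : ℂ) * e n (k * j)
      = e n (-k) * uh k := by
    intro k
    rw [← sum_shift n (fun j => ((u (j + 1) : ℝ) : ℂ) * e n (k * j)) (-1)]
    simp only [neg_add_cancel_right]
    rw [huh, Finset.mul_sum]
    refine Finset.sum_congr rfl fun j _ => ?_
    rw [show k * (j + -1) = k * j + -k from by ring, e_add]
    ring
  have key : ∀ k : ZMod n, (2 - e n k - e n (-k)) * uh k = (μ : ℂ) * uh k := by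
    intro k
    have hLj : ∀ j : ZMod n, (2 * u j - u (j-1) - u (j+1)) = μ * u j := by
      intro j
      have h := congrFun hu j
      rw [cycLap_mulVec n hn] at h
      simpa using h
    have expand : ∑ j : ZMod n, (((2 * u j - u (j-1) - u (j+1) : ℝ)) : ℂ) * e n (k * j)
        = (2 - e n k - e n (-k)) * uh k := by
      push_cast
      simp_rw [sub_mul]
      rw [Finset.sum_sub_distrib, Finset.sum_sub_distrib, shift1 k, shift2 k]
      have h2 : ∑ j : ZMod n, 2 * ((u j : ℂ)) * e n (k * j) = 2 * uh k := by
        rw [huh, Finset.mul_sum]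
        refine Finset.sum_congr rfl fun j _ => by ring
      rw [h2]
    rw [← expand]
    have : ∀ j : ZMod n, (((2 * u j - u (j-1) - u (j+1) : ℝ)) : ℂ) * e n (k * j)
        = (μ : ℂ) * ((u j : ℂ) * e n (k * j)) := by
      intro j
      rw [hLj j]
      push_cast
      ring
    rw [Finset.sum_congr rfl fun j _ => this j, ← Finset.mul_sum]
  have inner : ∀ a : ZMod n, ∑ k : ZMod n, e n (k * a) = if a = 0 then (n:ℂ) else 0 := by
    intro a
    by_cases ha : a = 0
    · subst ha
      rw [if_pos rfl]
      simp only [mul_zero, e_zero]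
      rw [Finset.sum_const, Finset.card_univ, ZMod.card]
      simp
    · rw [if_neg ha]
      exact sum_e n ha
  have hexists : ∃ k : ZMod n, uh k ≠ 0 := by
    by_contra hall
    push_neg at hall
    apply hne
    funext j0
    have h0 : ∑ k : ZMod n, uh k * e n (-(k * j0)) = 0 := by
      rw [Finset.sum_congr rfl fun k _ => by rw [hall k, zero_mul], Finset.sum_const,
        smul_zero]
    have h1 : ∑ k : ZMod n, uh k * e n (-(k * j0))
        = ∑ j : ZMod n, (u j : ℂ) * ∑ k : ZMod n, e n (k * (j - j0)) := by
      rw [huh]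
      simp_rw [Finset.sum_mul]
      rw [Finset.sum_comm]
      refine Finset.sum_congr rfl fun j _ => ?_
      rw [Finset.mul_sum]
      refine Finset.sum_congr rfl fun k _ => ?_
      rw [mul_assoc, ← e_add]
      congr 2
      ring
    have h2 : ∑ j : ZMod n, (u j : ℂ) * ∑ k : ZMod n, e n (k * (j - j0))
        = (n : ℂ) * (u j0 : ℂ) := by
      rw [Finset.sum_congr rfl fun j _ => by rw [inner (j - j0)]]
      have hcond : ∀ j : ZMod n, (j - j0 = 0) = (j = j0) := by
        intro j
        simp [sub_eq_zero]
      simp_rw [hcond]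
      have hpull : ∀ j : ZMod n, (u j : ℂ) * (if j = j0 then (n:ℂ) else 0)
          = if j = j0 then (n:ℂ) * (u j : ℂ) else 0 := by
        intro j
        by_cases h : j = j0 <;> simp [h] <;> ring
      rw [Finset.sum_congr rfl fun j _ => hpull j,
        Finset.sum_ite_eq' Finset.univ j0 (fun j => (n:ℂ) * (u j : ℂ))]
      simp
    have hfin := h1.symm.trans h0
    rw [h2] at hfin
    rcases mul_eq_zero.mp hfin with h | h
    · exact absurd h hnC
    · exact_mod_cast h
  obtain ⟨k0, hk0⟩ := hexists
  have hk0ne : k0 ≠ 0 := by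
    intro h
    apply hk0
    rw [huh, h]
    simp only [zero_mul, e_zero, mul_one]
    rw [← Complex.ofReal_sum, hsum, Complex.ofReal_zero]
  have hmu : (μ : ℂ) = 2 - e n k0 - e n (-k0) := by
    have := key k0
    field_simp [hk0] at this
    linear_combination -this
  have hmuR : μ = 2 - 2 * Real.cos (2 * π * k0.val / n) := by
    have h := hmu
    rw [show (2 : ℂ) - e n k0 - e n (-k0) = 2 - (e n k0 + e n (-k0)) from by ring,
      e_add_e_neg] at h
    have : (μ : ℂ) = ((2 - 2 * Real.cos (2 * π * k0.val / n) : ℝ) : ℂ) := by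
      rw [h]; push_cast; ring
    exact_mod_cast this
  set x : ℕ := k0.val with hx
  have hx1 : 1 ≤ x := Nat.one_le_iff_ne_zero.2 (fun h => hk0ne ((ZMod.val_eq_zero k0).1 h))
  have hx2 : x ≤ n - 1 := by
    have := ZMod.val_lt k0
    omega
  have hsin := sin_mono n hn hx1 hx2
  have hid : μ = (2 * Real.sin (π * x / n)) ^ 2 := by
    rw [hmuR]
    have harg : 2 * π * (x:ℝ) / n = 2 * (π * x / n) := by ring
    rw [harg, Real.cos_two_mul]
    have := Real.sin_sq_add_cos_sq (π * x / n)
    nlinarith [this]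
  have hsnn : 0 ≤ Real.sin (π / n) := by
    apply Real.sin_nonneg_of_nonneg_of_le_pi
    · positivity
    · have hnR : (1:ℝ) ≤ n := by exact_mod_cast Nat.one_le_of_lt (by omega : 1 < n)
      calc π / n ≤ π / 1 := by
            apply div_le_div_of_nonneg_left (le_of_lt Real.pi_pos) one_pos hnR
          _ = π := by ring
  rw [hid]
  nlinarith [hsin, hsnn]

lemma transpose_eq_self {B : Matrix (ZMod n) (ZMod n) ℝ} (hH : B.IsHermitian) : Bᵀ = B := by
  ext i j
  rw [Matrix.transpose_apply]
  have := hH.apply i j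
  rwa [star_trivial] at this

lemma dot_mulVec_symm {B : Matrix (ZMod n) (ZMod n) ℝ} (hH : B.IsHermitian)
    (x y : ZMod n → ℝ) : x ⬝ᵥ (B *ᵥ y) = (B *ᵥ x) ⬝ᵥ y := by
  rw [Matrix.dotProduct_mulVec]
  congr 1
  rw [← Matrix.mulVec_transpose, transpose_eq_self n hH]

lemma dot_self_nonneg (x : ZMod n → ℝ) : 0 ≤ x ⬝ᵥ x :=
  Finset.sum_nonneg fun j _ => mul_self_nonneg (x j)

lemma sqrt_eigen (hL : (cycLap n).PosSemidef) {v : ZMod n → ℝ} {s : ℝ}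
    (hs : 0 < s) (hv : cycLap n *ᵥ v = (s ^ 2) • v) : psdSqrt hL *ᵥ v = s • v := by
  set B := psdSqrt hL with hBdef
  have hB : B.PosSemidef := psdSqrt_posSemidef hL
  set w : ZMod n → ℝ := B *ᵥ v - s • v with hw
  have hBB : B * B = cycLap n := psdSqrt_mul_self hL
  have h1 : B *ᵥ w + s • w = 0 := by
    have hBBv : B *ᵥ (B *ᵥ v) = (s ^ 2) • v := by
      rw [Matrix.mulVec_mulVec, hBB, hv]
    rw [hw, Matrix.mulVec_sub, hBBv, Matrix.mulVec_smul]
    funext j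
    simp only [Pi.add_apply, Pi.sub_apply, Pi.smul_apply, Pi.zero_apply, smul_eq_mul]
    ring
  have h2 : w ⬝ᵥ (B *ᵥ w) + s * (w ⬝ᵥ w) = 0 := by
    have h := congrArg (fun z => w ⬝ᵥ z) h1
    simpa [dotProduct_add, dotProduct_smul, smul_eq_mul] using h
  have h3 : 0 ≤ w ⬝ᵥ (B *ᵥ w) := by
    have := hB.dotProduct_mulVec_nonneg w
    simpa using this
  have h4 : w ⬝ᵥ w = 0 := by
    have h5 := dot_self_nonneg n w
    nlinarith
  have h6 : w = 0 := dotProduct_self_eq_zero.mp h4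
  rw [hw, sub_eq_zero] at h6
  exact h6

lemma quad_lb (hn : 3 ≤ n) (hL : (cycLap n).PosSemidef) (v : ZMod n → ℝ)
    (hv : ∑ j : ZMod n, v j = 0) :
    2 * Real.sin (π / n) * (v ⬝ᵥ v) ≤ v ⬝ᵥ (psdSqrt hL *ᵥ v) := by
  set B := psdSqrt hL with hBdef
  have hB : B.PosSemidef := psdSqrt_posSemidef hL
  have hH : B.IsHermitian := hB.1
  have hBB : B * B = cycLap n := psdSqrt_mul_self hL
  set b := hH.eigenvectorBasis with hb
  set lam := hH.eigenvalues with hlam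
  have inner_eq_dot : ∀ x y : EuclideanSpace ℝ (ZMod n),
      (inner ℝ x y : ℝ) = (x : ZMod n → ℝ) ⬝ᵥ (y : ZMod n → ℝ) := by
    intro x y
    simp [PiLp.inner_apply, dotProduct, mul_comm]
  set a : ZMod n → ℝ := fun i => (b i : ZMod n → ℝ) ⬝ᵥ v with ha
  have vE : EuclideanSpace ℝ (ZMod n) := WithLp.toLp 2 v
  have h1 : ∑ i : ZMod n, a i * a i = v ⬝ᵥ v := by
    have := b.sum_inner_mul_inner (WithLp.toLp 2 v : EuclideanSpace ℝ (ZMod n)) (WithLp.toLp 2 v : EuclideanSpace ℝ (ZMod n))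
    rw [inner_eq_dot] at this
    simp only [WithLp.ofLp_toLp] at this
    rw [← this]
    refine Finset.sum_congr rfl fun i _ => ?_
    rw [inner_eq_dot, inner_eq_dot]
    simp only [WithLp.ofLp_toLp]
    rw [ha]
    simp only []
    rw [dotProduct_comm (b i : ZMod n → ℝ) v]
  have heig : ∀ i, B *ᵥ (b i : ZMod n → ℝ) = lam i • (b i : ZMod n → ℝ) := fun i =>
    hH.mulVec_eigenvectorBasis i
  have h2 : ∑ i : ZMod n, lam i * (a i * a i) = v ⬝ᵥ (B *ᵥ v) := by
    have := b.sum_inner_mul_inner (WithLp.toLp 2 v : EuclideanSpace ℝ (ZMod n))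
      (WithLp.toLp 2 (B *ᵥ v : ZMod n → ℝ) : EuclideanSpace ℝ (ZMod n))
    rw [inner_eq_dot] at this
    simp only [WithLp.ofLp_toLp] at this
    rw [← this]
    refine Finset.sum_congr rfl fun i _ => ?_
    rw [inner_eq_dot, inner_eq_dot]
    simp only [WithLp.ofLp_toLp]
    have hbi : (b i : ZMod n → ℝ) ⬝ᵥ (B *ᵥ v) = lam i * a i := by
      rw [dot_mulVec_symm n hH, heig i, ha]
      simp only []
      rw [smul_dotProduct]
      rfl
    rw [hbi, ha]
    simp only []
    rw [dotProduct_comm (b i : ZMod n → ℝ) v]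
    ring
  have h3 : ∀ i ∈ Finset.univ, 2 * Real.sin (π / n) * (a i * a i) ≤ lam i * (a i * a i) := by
    intro i _
    have hlam0 : 0 ≤ lam i := hB.eigenvalues_nonneg i
    have hLbi : cycLap n *ᵥ (b i : ZMod n → ℝ) = (lam i ^ 2) • (b i : ZMod n → ℝ) := by
      rw [← hBB, ← Matrix.mulVec_mulVec, heig i, Matrix.mulVec_smul, heig i, smul_smul, sq]
    rcases eq_or_lt_of_le hlam0 with hz | hpos
    · -- zero eigenvalue: eigenvector is constant, so a i = 0
      have hquad : (b i : ZMod n → ℝ) ⬝ᵥ (cycLap n *ᵥ (b i : ZMod n → ℝ)) = 0 := by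
        rw [hLbi, ← hz]
        simp
      have hconst := const_of_quad_zero n hn _ hquad
      have hai : a i = 0 := by
        rw [ha]
        simp only []
        rw [dotProduct]
        have : ∀ j : ZMod n, (b i : ZMod n → ℝ) j * v j = (b i : ZMod n → ℝ) 0 * v j := by
          intro j; rw [hconst j]
        rw [Finset.sum_congr rfl fun j _ => this j, ← Finset.mul_sum, hv, mul_zero]
      rw [hai]
      simp
    · -- positive eigenvalue
      have hsum_b : ∑ j : ZMod n, (b i : ZMod n → ℝ) j = 0 := by
        have hsum_eq : ∑ j : ZMod n, (cycLap n *ᵥ (b i : ZMod n → ℝ)) j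
            = lam i ^ 2 * ∑ j : ZMod n, (b i : ZMod n → ℝ) j := by
          rw [hLbi, Finset.mul_sum]
          exact Finset.sum_congr rfl fun j _ => rfl
        have hsum_zero : ∑ j : ZMod n, (cycLap n *ᵥ (b i : ZMod n → ℝ)) j = 0 := by
          rw [Finset.sum_congr rfl fun j _ => cycLap_mulVec n hn _ j]
          rw [Finset.sum_sub_distrib, Finset.sum_sub_distrib]
          have r1 : ∑ j : ZMod n, (b i : ZMod n → ℝ) (j - 1) = ∑ j : ZMod n, (b i : ZMod n → ℝ) j := by
            rw [← sum_shift n (fun j => (b i : ZMod n → ℝ) (j - 1)) 1]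
            exact Finset.sum_congr rfl fun j _ => by rw [add_sub_cancel_right]
          have r2 : ∑ j : ZMod n, (b i : ZMod n → ℝ) (j + 1) = ∑ j : ZMod n, (b i : ZMod n → ℝ) j :=
            sum_shift n (fun j => (b i : ZMod n → ℝ) j) 1
          rw [r1, r2, ← Finset.mul_sum]
          ring
        rw [hsum_zero] at hsum_eq
        have : lam i ^ 2 ≠ 0 := by positivity
        field_simp at hsum_eq
        exact (mul_eq_zero.mp hsum_eq.symm).resolve_left this
      have hbne : (b i : ZMod n → ℝ) ≠ 0 := by
        intro h
        exact b.orthonormal.ne_zero i (by ext j; exact congrFun h j)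
      have hlb := eig_lb n hn hLbi hsum_b hbne
      have hsnn : 0 ≤ Real.sin (π / n) := by
        apply Real.sin_nonneg_of_nonneg_of_le_pi
        · positivity
        · have hnR : (1:ℝ) ≤ n := by exact_mod_cast Nat.one_le_of_lt (by omega : 1 < n)
          calc π / n ≤ π / 1 := by
                apply div_le_div_of_nonneg_left (le_of_lt Real.pi_pos) one_pos hnR
              _ = π := by ring
      have hcle : 2 * Real.sin (π / n) ≤ lam i := by nlinarith
      have haa : 0 ≤ a i * a i := mul_self_nonneg _
      nlinarith
  have hfinal := Finset.sum_le_sum h3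
  rw [h2] at hfinal
  calc 2 * Real.sin (π / n) * (v ⬝ᵥ v)
      = ∑ i : ZMod n, 2 * Real.sin (π / n) * (a i * a i) := by
        rw [← Finset.mul_sum, h1]
    _ ≤ v ⬝ᵥ (B *ᵥ v) := hfinal

lemma trace_form (B : Matrix (ZMod n) (ZMod n) ℝ) (X : Matrix (ZMod n) (Fin 2) ℝ) :
    (Xᵀ * B * X).trace
      = ∑ t : Fin 2, (fun j => X j t) ⬝ᵥ (B *ᵥ fun j => X j t) := by
  rw [Matrix.trace]
  refine Finset.sum_congr rfl fun t _ => ?_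
  rw [Matrix.diag_apply, Matrix.mul_apply]
  simp_rw [Matrix.mul_apply, Matrix.transpose_apply, Finset.sum_mul]
  rw [Finset.sum_comm]
  rw [dotProduct]
  refine Finset.sum_congr rfl fun l _ => ?_
  show _ = X l t * ((fun j => B l j) ⬝ᵥ fun j => X j t)
  rw [dotProduct, Finset.mul_sum]
  refine Finset.sum_congr rfl fun j _ => ?_
  ring

end CycAux

/-- The circular embedding minimizes the `L_n^{1/2}`-energy:
`X_Cᵀ X_C = I₂`, `X_Cᵀ 𝟏ₙ = 0`, `Tr(X_Cᵀ L_n^{1/2} X_C) = 4 sin(π/n)`, and for every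
`X ∈ ℝ^{n×2}` with `Xᵀ X = I₂` and `Xᵀ 𝟏ₙ = 0` one has
`Tr(Xᵀ L_n^{1/2} X) ≥ 4 sin(π/n)`. -/
theorem circular_embedding_minimizes (n : ℕ) [NeZero n] (hn : 3 ≤ n)
    (hL : (cycLap n).PosSemidef) :
    (circEmb n)ᵀ * circEmb n = 1 ∧
    (circEmb n)ᵀ *ᵥ (fun _ => (1 : ℝ)) = 0 ∧
    ((circEmb n)ᵀ * psdSqrt hL * circEmb n).trace = 4 * Real.sin (π / n) ∧
    (∀ X : Matrix (ZMod n) (Fin 2) ℝ, Xᵀ * X = 1 → Xᵀ *ᵥ (fun _ => (1 : ℝ)) = 0 →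
      4 * Real.sin (π / n) ≤ (Xᵀ * psdSqrt hL * X).trace) := by
  have hnR : (0:ℝ) < n := by exact_mod_cast NeZero.pos n
  have hsinpos : 0 < Real.sin (π / n) := by
    apply Real.sin_pos_of_pos_of_lt_pi
    · positivity
    · apply div_lt_self Real.pi_pos
      exact_mod_cast by omega
  set c : ℝ := 2 * Real.sin (π / n) with hc
  have hcpos : 0 < c := by positivity
  have hid : c ^ 2 = 2 - 2 * Real.cos (2 * π / n) := by
    rw [show 2 * π / (n:ℝ) = 2 * (π / (n:ℝ)) from by ring, Real.cos_two_mul]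
    have := Real.sin_sq_add_cos_sq (π / n)
    rw [hc]
    nlinarith [this]
  have hgram : ∀ t : Fin 2, (fun j => circEmb n j t) ⬝ᵥ (fun j => circEmb n j t) = 1 := by
    intro t
    rw [dotProduct]
    have := CycAux.gram_entry n hn t t
    rw [this, if_pos rfl]
  have hBcol : ∀ t : Fin 2,
      psdSqrt hL *ᵥ (fun j => circEmb n j t) = c • (fun j => circEmb n j t) := by
    intro t
    refine CycAux.sqrt_eigen n hL hcpos ?_
    rw [CycAux.col_eigen n hn t, hid]
  refine ⟨?_, ?_, ?_, ?_⟩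
  · ext s t
    rw [Matrix.mul_apply, Matrix.one_apply]
    simp_rw [Matrix.transpose_apply]
    exact CycAux.gram_entry n hn s t
  · funext t
    show (fun j => (circEmb n)ᵀ t j) ⬝ᵥ (fun _ => (1:ℝ)) = 0
    rw [dotProduct]
    simp only [Matrix.transpose_apply, mul_one]
    exact CycAux.col_sum_zero n hn t
  · rw [CycAux.trace_form n (psdSqrt hL) (circEmb n)]
    have hterm : ∀ t : Fin 2,
        (fun j => circEmb n j t) ⬝ᵥ (psdSqrt hL *ᵥ fun j => circEmb n j t) = c := by
      intro t
      rw [hBcol t, dotProduct_smul, smul_eq_mul, hgram t, mul_one]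
    rw [Finset.sum_congr rfl fun t _ => hterm t, Finset.sum_const, Finset.card_univ]
    simp only [Fintype.card_fin, nsmul_eq_mul, Nat.cast_ofNat]
    rw [hc]; ring
  · intro X hX hX1
    rw [CycAux.trace_form n (psdSqrt hL) X]
    have hcol1 : ∀ t : Fin 2, (fun j => X j t) ⬝ᵥ (fun j => X j t) = 1 := by
      intro t
      have h := congrFun (congrFun hX t) t
      rw [Matrix.mul_apply] at h
      simp_rw [Matrix.transpose_apply] at h
      rw [dotProduct, h, Matrix.one_apply_eq]
    have hcolsum : ∀ t : Fin 2, ∑ j : ZMod n, X j t = 0 := by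
      intro t
      have h := congrFun hX1 t
      have h2 : (fun j => Xᵀ t j) ⬝ᵥ (fun _ => (1:ℝ)) = 0 := h
      rw [dotProduct] at h2
      simpa [Matrix.transpose_apply] using h2
    have hb : ∀ t ∈ Finset.univ, c ≤ (fun j => X j t) ⬝ᵥ (psdSqrt hL *ᵥ fun j => X j t) := by
      intro t _
      have := CycAux.quad_lb n hn hL (fun j => X j t) (hcolsum t)
      rwa [hcol1 t, mul_one] at this
    have hsum := Finset.sum_le_sum hb
    rw [Finset.sum_const, Finset.card_univ, Fintype.card_fin] at hsum
    calc 4 * Real.sin (π / n) = (2 : ℕ) • c := by rw [hc]; simp; ring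
      _ ≤ _ := hsum

end
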